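/- Chain rule for corotational rates: let σ : ℝ^{3×3} → ℝ^{3×3} be differentiable and isotropic, i.e. σ(Q A Qᵀ) = Q σ(A) Qᵀ for every orthogonal Q and every A. Let t ↦ B(t) be a differentiable curve of symmetric positive definite 3×3 matrices and t ↦ Ω(t) a curve of skew-symmetric 3×3 matrices, and define the corotational derivative D°[X](t) := X'(t) − Ω(t) X(t) + X(t) Ω(t). Then D°[σ ∘ B](t) = Dσ(B(t)).(D°[B](t)) for all t, where Dσ(B(t)) is the Fréchet derivative of σ at B(t). -/

import Mathlib

open Matrix

noncomputable section

attribute [local instance] Matrix.frobeniusNormedAddCommGroup Matrix.frobeniusNormedSpace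

attribute [local instance] Matrix.frobeniusNormedRing Matrix.frobeniusNormedAlgebra

open NormedSpace in
/-- Key lemma: isotropy transfers commutators through the derivative. -/
lemma isotropic_fderiv_comm
    (σ : Matrix (Fin 3) (Fin 3) ℝ → Matrix (Fin 3) (Fin 3) ℝ)
    (hσ : Differentiable ℝ σ)
    (hiso : ∀ Q A : Matrix (Fin 3) (Fin 3) ℝ, Qᵀ * Q = 1 → σ (Q * A * Qᵀ) = Q * σ A * Qᵀ)
    (A W : Matrix (Fin 3) (Fin 3) ℝ) (hW : Wᵀ = -W) :
    fderiv ℝ σ A (W * A - A * W) = W * σ A - σ A * W := by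
  set E : ℝ → Matrix (Fin 3) (Fin 3) ℝ := fun s => exp (s • W) with hE_def
  set F : ℝ → Matrix (Fin 3) (Fin 3) ℝ := fun s => exp (-(s • W)) with hF_def
  have hEF : ∀ s, (E s)ᵀ = F s := by
    intro s
    simp only [hE_def, hF_def]
    rw [← Matrix.exp_transpose, transpose_smul, hW, smul_neg]
  have horth : ∀ s, (E s)ᵀ * E s = 1 := by
    intro s
    rw [hEF]
    simp only [hE_def, hF_def]
    erw [← exp_add_of_commute (((Commute.refl (s • W)).neg_left))]
    simp [exp_zero]
  have hE0 : E 0 = 1 := by simp [hE_def, exp_zero]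
  have hF0 : F 0 = 1 := by simp [hF_def, exp_zero]
  have hEderiv : HasDerivAt E W 0 := by
    have := hasDerivAt_exp_smul_const (𝕂 := ℝ) W 0
    simp [exp_zero] at this; exact this
  have hFderiv : HasDerivAt F (-W) 0 := by
    have := hasDerivAt_exp_smul_const (𝕂 := ℝ) (-W) 0
    simp [exp_zero, smul_neg] at this; exact this
  -- gcurve s = E s * A * (E s)ᵀ
  have hg : HasDerivAt (fun s => E s * A * F s) (W * A - A * W) 0 := by
    have h1 : HasDerivAt (fun s => E s * A) (W * A) 0 := by
      exact hEderiv.mul_const A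
    have := h1.mul hFderiv
    simp only [hE0, hF0, mul_one, one_mul, mul_neg, sub_eq_add_neg] at this ⊢; exact this
  -- σ composed with the curve, two ways
  have hiso' : ∀ s, σ (E s * A * F s) = E s * σ A * F s := by
    intro s
    rw [← hEF, hiso _ _ (horth s)]
  have hcomp : HasDerivAt (fun s => σ (E s * A * F s))
      (fderiv ℝ σ A (W * A - A * W)) 0 := by
    have := ((hσ (E 0 * A * F 0)).hasFDerivAt).comp_hasDerivAt 0 hg
    simp only [hE0, hF0, one_mul, mul_one] at this; exact this
  have hrhs : HasDerivAt (fun s => E s * σ A * F s)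
      (W * σ A - σ A * W) 0 := by
    have h1 : HasDerivAt (fun s => E s * σ A) (W * σ A) 0 := by
      exact hEderiv.mul_const (σ A)
    have := h1.mul hFderiv
    simp only [hE0, hF0, mul_one, one_mul, mul_neg, sub_eq_add_neg] at this ⊢; exact this
  have : HasDerivAt (fun s => σ (E s * A * F s)) (W * σ A - σ A * W) 0 := by
    simpa only [hiso'] using hrhs
  exact hcomp.unique this

/-- Chain rule for corotational rates: for a differentiable isotropic
tensor function `σ`, a differentiable curve `B` of symmetric positive definite matrices
and a curve `Ω` of skew-symmetric matrices,
`D°[σ ∘ B](t) = Dσ(B(t)).(D°[B](t))`. -/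
theorem corotational_chain_rule
    (σ : Matrix (Fin 3) (Fin 3) ℝ → Matrix (Fin 3) (Fin 3) ℝ)
    (hσ : Differentiable ℝ σ)
    (hiso : ∀ Q A : Matrix (Fin 3) (Fin 3) ℝ, Qᵀ * Q = 1 → σ (Q * A * Qᵀ) = Q * σ A * Qᵀ)
    (B : ℝ → Matrix (Fin 3) (Fin 3) ℝ) (hB : Differentiable ℝ B)
    (hBpos : ∀ t, (B t).PosDef)
    (Ω : ℝ → Matrix (Fin 3) (Fin 3) ℝ) (hΩ : ∀ t, (Ω t)ᵀ = -(Ω t)) (t : ℝ) :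
    deriv (fun s => σ (B s)) t - Ω t * σ (B t) + σ (B t) * Ω t
      = fderiv ℝ σ (B t) (deriv B t - Ω t * B t + B t * Ω t) := by
  have hchain : deriv (fun s => σ (B s)) t = fderiv ℝ σ (B t) (deriv B t) := by
    have := ((hσ (B t)).hasFDerivAt).comp_hasDerivAt t (hB t).hasDerivAt
    exact this.deriv
  have hkey := isotropic_fderiv_comm σ hσ hiso (B t) (Ω t) (hΩ t)
  have harg : deriv B t - Ω t * B t + B t * Ω t
      = deriv B t - (Ω t * B t - B t * Ω t) := by abel
  rw [harg, map_sub, hkey, hchain]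
  abel
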